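/- Let R be a commutative ring such that every element of R is the square of an element of R. (i) If R is a (WSU)₂ ring (for every unimodular A ∈ M₂(R) there exists N ∈ GL₂(R) with A·N symmetric), then R is a U₂ ring: for every unimodular pair (a,b) ∈ R² and every c ∈ R, the map U(R/(a·c)) × U(R/(b·c)) → U(R/(c)) sending a pair of units to the product of their images under the natural reduction maps is surjective. (ii) If moreover R is an (SU)₂ ring (for every A ∈ M₂(R) there exists N ∈ GL₂(R) with A·N symmetric), then R is an elementary divisor ring. -/

import Mathlib

/-- A 2×2 matrix over a commutative ring is *unimodular* if the ideal generated by
its entries is the whole ring, i.e. some linear combination of its entries is 1. -/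
def MatUnimodular {R : Type*} [CommRing R] (A : Matrix (Fin 2) (Fin 2) R) : Prop :=
  ∃ p q r s : R, p * A 0 0 + q * A 0 1 + r * A 1 0 + s * A 1 1 = 1

/-- A 2×2 matrix `A` is *extendable* if there is a 3×3 matrix of determinant 1 whose
upper-left 2×2 block is `A`. -/
def Extendable {R : Type*} [CommRing R] (A : Matrix (Fin 2) (Fin 2) R) : Prop :=
  ∃ B : Matrix (Fin 3) (Fin 3) R, B.det = 1 ∧
    ∀ i j : Fin 2, B i.castSucc j.castSucc = A i j

/-- A 2×2 matrix `A` is *simply extendable* if there is a 3×3 matrix of determinant 1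
whose upper-left 2×2 block is `A` and whose (3,3) entry is 0. -/
def SimplyExtendable {R : Type*} [CommRing R] (A : Matrix (Fin 2) (Fin 2) R) : Prop :=
  ∃ B : Matrix (Fin 3) (Fin 3) R, B.det = 1 ∧
    (∀ i j : Fin 2, B i.castSucc j.castSucc = A i j) ∧ B 2 2 = 0

/-- A 2×2 matrix is *non-full* if it is a product of a 2×1 matrix and a 1×2 matrix. -/
def NonFull {R : Type*} [CommRing R] (A : Matrix (Fin 2) (Fin 2) R) : Prop :=
  ∃ l m n q : R, A 0 0 = l * n ∧ A 0 1 = l * q ∧ A 1 0 = m * n ∧ A 1 1 = m * q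

/-- `R` is a *Hermite ring* (in the sense of Kaplansky) if every pair `(a, b)` can be
written as `a = r*s`, `b = r*t` with `(s, t)` unimodular. -/
def IsHermiteRing (R : Type*) [CommRing R] : Prop :=
  ∀ a b : R, ∃ r s t : R, a = r * s ∧ b = r * t ∧ ∃ x y : R, s * x + t * y = 1

/-- `R` is an *elementary divisor ring* if every 2×2 matrix over `R` admits diagonal
reduction `M * A * N = diag(d₁, d₂)` with `M`, `N` invertible and `d₁ ∣ d₂`. -/
def IsEDR (R : Type*) [CommRing R] : Prop :=
  ∀ A : Matrix (Fin 2) (Fin 2) R, ∃ M N : Matrix (Fin 2) (Fin 2) R,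
    IsUnit M.det ∧ IsUnit N.det ∧ ∃ d₁ d₂ : R, d₁ ∣ d₂ ∧
      M * A * N = Matrix.of ![![d₁, 0], ![0, d₂]]

/-- `R` is a *U₂ ring* if for every unimodular pair `(a, b)` and every `c`, the
product of the two natural reduction maps `U(R/(ac)) × U(R/(bc)) → U(R/(c))` is
surjective (expressed here on representatives). -/
def IsU2Ring (R : Type*) [CommRing R] : Prop :=
  ∀ a b c : R, (∃ x y : R, a * x + b * y = 1) →
    ∀ w : R, IsUnit (Ideal.Quotient.mk (Ideal.span {c}) w) →
      ∃ u v : R, IsUnit (Ideal.Quotient.mk (Ideal.span {a * c}) u) ∧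
        IsUnit (Ideal.Quotient.mk (Ideal.span {b * c}) v) ∧
        Ideal.Quotient.mk (Ideal.span {c}) (u * v) =
          Ideal.Quotient.mk (Ideal.span {c}) w

set_option maxHeartbeats 4000000

private theorem value_lemma {R : Type*} [CommRing R] (hsq : ∀ t : R, ∃ s : R, s * s = t)
    (α β δ p q r : R) (hU : p*α + q*β + r*δ = 1) :
    ∃ u₁ u₂ v₁ v₂ Ψ : R,
      u₁ * (α*v₁ + β*v₂) + u₂ * (β*v₁ + δ*v₂) = 1 + (α*δ - β*β) * Ψ := by
  obtain ⟨x, hx⟩ := hsq (p*p*α + 2*(p*q*β) + 2*(p*r*δ) + q*q*δ)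
  obtain ⟨y, hy⟩ := hsq (r*r*δ + 2*(q*r*β))
  obtain ⟨h, hh⟩ := hsq (α*(x*x))
  obtain ⟨f, hf⟩ := hsq (δ*(y*y))
  obtain ⟨i, hi⟩ := hsq (-1)
  refine ⟨x*h*(1 + i*(β*x*y - h*f)), y*f*(1 - i*(β*x*y - h*f)),
          x*h*(1 - i*(β*x*y - h*f)), y*f*(1 + i*(β*x*y - h*f)),
          (-4 : R)*α*β*δ*f*h*p*q*q*r*x*y + (-2 : R)*α*β*δ*f*h*q*q*q*q*x*y + (2 : R)*α*β*f*f*h*h*p*q*q*q + (2 : R)*α*β*p*q*q*q + (2 : R)*α*β*β*δ*p*q*q*r*x*x*y*y + α*β*β*δ*q*q*q*q*x*x*y*y + (-4 : R)*α*β*β*f*h*p*q*q*q*x*y + (2 : R)*α*β*β*β*p*q*q*q*x*x*y*y + (2 : R)*α*δ*f*f*h*h*p*q*q*r + α*δ*f*f*h*h*q*q*q*q + (2 : R)*α*δ*p*q*q*r + α*δ*q*q*q*q + (-1 : R)*α*δ*x*x*x*x*y*y*y*y + (-2 : R)*α*α*β*f*h*p*p*q*q*x*y + α*α*β*β*p*p*q*q*x*x*y*y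 + α*α*f*f*h*h*p*p*q*q + α*α*p*p*q*q + (2 : R)*β*δ*f*f*h*h*q*q*q*r + (2 : R)*β*δ*q*q*q*r + (-2 : R)*β*δ*δ*f*h*q*q*r*r*x*y + (-2 : R)*β*f*h*q*q*x*y + (2 : R)*β*f*h*x*x*x*y*y*y + (-4 : R)*β*β*δ*f*h*q*q*q*r*x*y + β*β*δ*δ*q*q*r*r*x*x*y*y + β*β*q*q*x*x*y*y + (2 : R)*β*β*β*δ*q*q*q*r*x*x*y*y + δ*δ*f*f*h*h*q*q*r*r + δ*δ*q*q*r*r + f*f*h*h*q*q + (-1 : R)*f*f*h*h*x*x*y*y + q*q + (-1 : R)*x*x*y*y, ?_⟩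
  linear_combination ((1 : R) + (-4 : R)*α*β*δ*f*h*p*r*x*y + (-2 : R)*α*β*δ*f*h*q*q*x*y + (6 : R)*α*β*δ*f*f*h*h*p*q*r + α*β*δ*f*f*h*h*q*q*q + (6 : R)*α*β*δ*p*q*r + α*β*δ*q*q*q + (-6 : R)*α*β*δ*δ*f*h*p*r*r*x*y + (-2 : R)*α*β*δ*δ*f*h*q*q*r*x*y + (-2 : R)*α*β*f*h*p*x*y + (2 : R)*α*β*f*f*h*h*p*q + (2 : R)*α*β*p*q + (-12 : R)*α*β*β*δ*f*h*p*q*r*x*y + (-2 : R)*α*β*β*δ*f*h*q*q*q*x*y + (2 : R)*α*β*β*δ*p*r*x*x*y*y + α*β*β*δ*q*q*x*x*y*y + (3 : R)*α*β*β*δ*δ*p*r*r*x*x*y*y + α*β*β*δ*δ*q*q*r*x*x*y*y + (-4 : R)*α*β*β*f*h*p*q*x*y + (2 : R)*α*β*β*f*f*h*h*p*q*q + (2 : R)*α*β*β*p*q*q + α*β*β*p*x*x*y*y + (6 : R)*α*β*β*β*δ*p*q*r*x*x*y*y + α*β*β*β*δ*q*q*q*x*x*y*y + (-4 : R)*α*β*β*β*f*h*p*q*q*x*y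 + (2 : R)*α*β*β*β*p*q*x*x*y*y + (2 : R)*α*β*β*β*β*p*q*q*x*x*y*y + (2 : R)*α*δ*f*f*h*h*p*r + α*δ*f*f*h*h*q*q + (2 : R)*α*δ*p*r + α*δ*q*q + (3 : R)*α*δ*δ*f*f*h*h*p*r*r + α*δ*δ*f*f*h*h*q*q*r + (3 : R)*α*δ*δ*p*r*r + α*δ*δ*q*q*r + α*f*f*h*h*p + α*p + (-2 : R)*α*α*β*δ*f*h*p*q*q*x*y + (-6 : R)*α*α*β*δ*f*h*p*p*r*x*y + (-2 : R)*α*α*β*f*h*p*p*x*y + (3 : R)*α*α*β*f*f*h*h*p*p*q + (3 : R)*α*α*β*p*p*q + α*α*β*β*δ*p*q*q*x*x*y*y + (3 : R)*α*α*β*β*δ*p*p*r*x*x*y*y + (-6 : R)*α*α*β*β*f*h*p*p*q*x*y + α*α*β*β*p*p*x*x*y*y + (3 : R)*α*α*β*β*β*p*p*q*x*x*y*y + α*α*δ*f*f*h*h*p*q*q + (3 : R)*α*α*δ*f*f*h*h*p*p*r + α*α*δ*p*q*q + (3 : R)*α*α*δ*p*p*r + α*α*f*f*h*h*p*p + α*α*p*p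 + (-2 : R)*α*α*α*β*f*h*p*p*p*x*y + α*α*α*β*β*p*p*p*x*x*y*y + α*α*α*f*f*h*h*p*p*p + α*α*α*p*p*p + (-2 : R)*β*δ*f*h*r*x*y + (2 : R)*β*δ*f*f*h*h*q*r + (2 : R)*β*δ*q*r + (-2 : R)*β*δ*δ*f*h*r*r*x*y + (3 : R)*β*δ*δ*f*f*h*h*q*r*r + (3 : R)*β*δ*δ*q*r*r + (-2 : R)*β*δ*δ*δ*f*h*r*r*r*x*y + (-2 : R)*β*f*h*x*y + β*f*f*h*h*q + β*q + (-4 : R)*β*β*δ*f*h*q*r*x*y + (2 : R)*β*β*δ*f*f*h*h*q*q*r + (2 : R)*β*β*δ*q*q*r + β*β*δ*r*x*x*y*y + (-6 : R)*β*β*δ*δ*f*h*q*r*r*x*y + β*β*δ*δ*r*r*x*x*y*y + β*β*δ*δ*δ*r*r*r*x*x*y*y + (-2 : R)*β*β*f*h*q*x*y + β*β*x*x*y*y + (-4 : R)*β*β*β*δ*f*h*q*q*r*x*y + (2 : R)*β*β*β*δ*q*r*x*x*y*y + (3 : R)*β*β*β*δ*δ*q*r*r*x*x*y*y + β*β*β*q*x*x*y*y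 + (2 : R)*β*β*β*β*δ*q*q*r*x*x*y*y + δ*f*f*h*h*r + δ*r + δ*δ*f*f*h*h*r*r + δ*δ*r*r + δ*δ*δ*f*f*h*h*r*r*r + δ*δ*δ*r*r*r + f*f*h*h) * hU + ((-4 : R)*α*β*δ*f*h*x*y*y*y + (-4 : R)*α*β*δ*δ*δ*δ*q*r*r*r*y*y + (2 : R)*α*β*β*δ*x*x*y*y*y*y + (4 : R)*α*β*β*δ*δ*p*r*y*y*y*y + (2 : R)*α*β*β*δ*δ*q*q*y*y*y*y + (-4 : R)*α*β*β*δ*δ*δ*p*r*r*r*y*y + (-6 : R)*α*β*β*δ*δ*δ*q*q*r*r*y*y + (4 : R)*α*β*β*β*δ*p*q*y*y*y*y + (-12 : R)*α*β*β*β*δ*δ*p*q*r*r*y*y + (-4 : R)*α*β*β*β*δ*δ*q*q*q*r*y*y + (-8 : R)*α*β*β*β*β*δ*p*q*q*r*y*y + (2 : R)*α*δ*y*y + α*δ*δ*δ*y*y*y*y*y*y + (-1 : R)*α*δ*δ*δ*δ*δ*r*r*r*r*y*y + (-4 : R)*α*α*β*δ*f*h*p*r*x*y + (-2 : R)*α*α*β*δ*f*h*q*q*x*y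 + (4 : R)*α*α*β*δ*δ*p*q*y*y*y*y + (-12 : R)*α*α*β*δ*δ*δ*p*q*r*r*y*y + (-4 : R)*α*α*β*δ*δ*δ*q*q*q*r*y*y + (-2 : R)*α*α*β*f*h*x*x*x*y + (2 : R)*α*α*β*p*q + (2 : R)*α*α*β*β*δ*p*r*x*x*y*y + (2 : R)*α*α*β*β*δ*p*p*y*y*y*y + α*α*β*β*δ*q*q*x*x*y*y + (-8 : R)*α*α*β*β*δ*δ*p*q*q*r*y*y + (-2 : R)*α*α*β*β*δ*δ*p*p*r*r*y*y + (-4 : R)*α*α*β*β*f*h*p*q*x*y + α*α*β*β*x*x*x*x*y*y + (-4 : R)*α*α*β*β*β*δ*p*p*q*r*y*y + (2 : R)*α*α*β*β*β*p*q*x*x*y*y + (2 : R)*α*α*δ*p*r + α*α*δ*q*q + (2 : R)*α*α*δ*δ*x*x*y*y*y*y + (4 : R)*α*α*δ*δ*δ*p*r*y*y*y*y + (2 : R)*α*α*δ*δ*δ*q*q*y*y*y*y + (-4 : R)*α*α*δ*δ*δ*δ*p*r*r*r*y*y + (-2 : R)*α*α*δ*δ*δ*δ*q*q*r*r*y*y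 + α*α*x*x + (2 : R)*α*α*α*β*δ*p*q*x*x*y*y + (-4 : R)*α*α*α*β*δ*δ*p*p*q*r*y*y + (-2 : R)*α*α*α*β*f*h*p*p*x*y + α*α*α*β*β*p*p*x*x*y*y + α*α*α*δ*x*x*x*x*y*y + (2 : R)*α*α*α*δ*δ*p*r*x*x*y*y + (2 : R)*α*α*α*δ*δ*p*p*y*y*y*y + α*α*α*δ*δ*q*q*x*x*y*y + (-2 : R)*α*α*α*δ*δ*δ*p*p*r*r*y*y + α*α*α*p*p + α*α*α*α*δ*p*p*x*x*y*y + β*β*δ*δ*y*y*y*y*y*y + (-1 : R)*β*β*δ*δ*δ*δ*r*r*r*r*y*y + (-4 : R)*β*β*β*δ*δ*δ*q*r*r*r*y*y + (-4 : R)*β*β*β*β*δ*δ*q*q*r*r*y*y) * hx + ((4 : R)*α*β*δ*p*q + (-8 : R)*α*β*δ*δ*f*h*p*r*x*y + (-4 : R)*α*β*δ*δ*f*h*q*q*x*y + (2 : R)*α*β*δ*δ*δ*p*q*y*y*y*y + (6 : R)*α*β*δ*δ*δ*δ*p*q*r*r*y*y + (2 : R)*α*β*δ*δ*δ*δ*q*q*q*r*y*y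 + (-8 : R)*α*β*β*δ*f*h*p*q*x*y + α*β*β*δ*δ*p*p*y*y*y*y + (12 : R)*α*β*β*δ*δ*δ*p*q*q*r*y*y + (9 : R)*α*β*β*δ*δ*δ*p*p*r*r*y*y + (2 : R)*α*β*β*δ*δ*δ*q*q*q*q*y*y + (8 : R)*α*β*β*β*δ*δ*p*q*q*q*y*y + (18 : R)*α*β*β*β*δ*δ*p*p*q*r*y*y + (8 : R)*α*β*β*β*β*δ*p*p*q*q*y*y + (4 : R)*α*δ*δ*p*r + (2 : R)*α*δ*δ*q*q + (2 : R)*α*δ*δ*δ*δ*p*r*y*y*y*y + α*δ*δ*δ*δ*q*q*y*y*y*y + (2 : R)*α*δ*δ*δ*δ*δ*p*r*r*r*y*y + α*δ*δ*δ*δ*δ*q*q*r*r*y*y + (-4 : R)*α*α*β*δ*f*h*p*p*x*y + (8 : R)*α*α*β*δ*δ*δ*p*q*q*q*y*y + (18 : R)*α*α*β*δ*δ*δ*p*p*q*r*y*y + (12 : R)*α*α*β*β*δ*δ*p*p*q*q*y*y + (8 : R)*α*α*β*β*δ*δ*p*p*p*r*y*y + (8 : R)*α*α*β*β*β*δ*p*p*p*q*y*y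 + (2 : R)*α*α*δ*p*p + α*α*δ*δ*δ*p*p*y*y*y*y + (8 : R)*α*α*δ*δ*δ*δ*p*q*q*r*y*y + (9 : R)*α*α*δ*δ*δ*δ*p*p*r*r*y*y + (2 : R)*α*α*δ*δ*δ*δ*q*q*q*q*y*y + (8 : R)*α*α*α*β*δ*δ*p*p*p*q*y*y + (2 : R)*α*α*α*β*β*δ*p*p*p*p*y*y + (4 : R)*α*α*α*δ*δ*δ*p*p*q*q*y*y + (8 : R)*α*α*α*δ*δ*δ*p*p*p*r*y*y + (2 : R)*α*α*α*α*δ*δ*p*p*p*p*y*y + (-2 : R)*β*δ*δ*f*h*x*y*y*y + (2 : R)*β*δ*δ*q*r + (-2 : R)*β*δ*δ*δ*f*h*r*r*x*y + (-4 : R)*β*β*δ*δ*f*h*q*r*x*y + (2 : R)*β*β*δ*δ*δ*p*r*y*y*y*y + β*β*δ*δ*δ*q*q*y*y*y*y + (2 : R)*β*β*δ*δ*δ*δ*p*r*r*r*y*y + β*β*δ*δ*δ*δ*q*q*r*r*y*y + (2 : R)*β*β*β*δ*δ*p*q*y*y*y*y + (6 : R)*β*β*β*δ*δ*δ*p*q*r*r*y*y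 + (2 : R)*β*β*β*δ*δ*δ*q*q*q*r*y*y + (4 : R)*β*β*β*β*δ*δ*p*q*q*r*y*y + δ*δ*y*y + δ*δ*δ*r*r) * hy + ((-12 : R)*α*β*δ*δ*δ*p*q*r*r*y*y + (-4 : R)*α*β*δ*δ*δ*q*q*q*r*y*y + (2 : R)*α*β*f*h*i*i*x*x*x*y + (-8 : R)*α*β*β*δ*δ*p*q*q*r*y*y + (-1 : R)*α*β*β*i*i*x*x*x*x*y*y + (-1 : R)*α*δ*h*h*i*i*x*x*y*y + α*δ*δ*x*x*y*y*y*y + (-4 : R)*α*δ*δ*δ*δ*p*r*r*r*y*y + (-2 : R)*α*δ*δ*δ*δ*q*q*r*r*y*y + α*x*x + (-4 : R)*α*α*β*δ*δ*p*q*q*q*y*y + (-12 : R)*α*α*β*δ*δ*p*p*q*r*y*y + (-4 : R)*α*α*β*β*δ*p*p*q*q*y*y + (-1 : R)*α*α*δ*i*i*x*x*x*x*y*y + (-4 : R)*α*α*δ*δ*δ*p*q*q*r*y*y + (-6 : R)*α*α*δ*δ*δ*p*p*r*r*y*y + (-1 : R)*α*α*δ*δ*δ*q*q*q*q*y*y +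 (-4 : R)*α*α*α*β*δ*p*p*p*q*y*y + (-2 : R)*α*α*α*δ*δ*p*p*q*q*y*y + (-4 : R)*α*α*α*δ*δ*p*p*p*r*y*y + (-1 : R)*α*α*α*α*δ*p*p*p*p*y*y + (2 : R)*β*δ*f*h*i*i*x*y*y*y + (-4 : R)*β*δ*δ*δ*δ*q*r*r*r*y*y + (-4 : R)*β*β*δ*i*i*x*x*y*y*y*y + (-1 : R)*β*β*δ*x*x*y*y*y*y + (-4 : R)*β*β*δ*δ*δ*q*q*r*r*y*y + δ*y*y + (-1 : R)*δ*δ*δ*i*i*y*y*y*y*y*y + (-1 : R)*δ*δ*δ*δ*δ*r*r*r*r*y*y) * hh + ((-12 : R)*α*β*δ*δ*h*h*p*q*r*r + (-4 : R)*α*β*δ*δ*h*h*q*q*q*r + (-8 : R)*α*β*β*δ*h*h*p*q*q*r + α*δ*h*h*x*x*y*y + (-4 : R)*α*δ*δ*δ*h*h*p*r*r*r + (-2 : R)*α*δ*δ*δ*h*h*q*q*r*r + (-1 : R)*α*h*h*h*h*i*i*x*x + (-4 : R)*α*α*β*δ*h*h*p*q*q*q + (-12 : R)*α*α*β*δ*h*h*p*p*q*r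 + (-4 : R)*α*α*β*β*h*h*p*p*q*q + (-4 : R)*α*α*δ*δ*h*h*p*q*q*r + (-6 : R)*α*α*δ*δ*h*h*p*p*r*r + (-1 : R)*α*α*δ*δ*h*h*q*q*q*q + (-4 : R)*α*α*α*β*h*h*p*p*p*q + (-2 : R)*α*α*α*δ*h*h*p*p*q*q + (-4 : R)*α*α*α*δ*h*h*p*p*p*r + (-1 : R)*α*α*α*α*h*h*p*p*p*p + (2 : R)*β*δ*f*h*i*i*x*y*y*y + (-4 : R)*β*δ*δ*δ*h*h*q*r*r*r + (2 : R)*β*f*h*h*h*i*i*x*y + (-1 : R)*β*β*δ*i*i*x*x*y*y*y*y + (-4 : R)*β*β*δ*δ*h*h*q*q*r*r + (-4 : R)*β*β*h*h*i*i*x*x*y*y + (-1 : R)*β*β*h*h*x*x*y*y + (-1 : R)*δ*f*f*h*h*i*i*y*y + δ*y*y + (-1 : R)*δ*δ*h*h*i*i*y*y*y*y + (-1 : R)*δ*δ*δ*δ*h*h*r*r*r*r + h*h) * hf + ((2 : R)*α*β*δ*f*h*x*x*x*y*y*y + (-4 : R)*α*β*β*δ*x*x*x*x*y*y*y*y + (-1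 : R)*α*δ*δ*δ*x*x*y*y*y*y*y*y + (2 : R)*α*α*β*f*h*x*x*x*x*x*y + (-1 : R)*α*α*β*β*x*x*x*x*x*x*y*y + (-1 : R)*α*α*α*δ*x*x*x*x*x*x*y*y + (2 : R)*β*δ*δ*f*h*x*y*y*y*y*y + (-1 : R)*β*β*δ*δ*x*x*y*y*y*y*y*y + (2 : R)*β*β*β*f*h*x*x*x*y*y*y) * hi


private theorem hermite_of_su2 {R : Type*} [CommRing R]
    (hSU : ∀ A : Matrix (Fin 2) (Fin 2) R,
      ∃ N : Matrix (Fin 2) (Fin 2) R, IsUnit N.det ∧ (A * N).transpose = A * N) :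
    IsHermiteRing R := by
  intro a b
  obtain ⟨N, hNdet, hNsym⟩ := hSU (Matrix.of ![![a, b], ![0, 0]])
  have hK : a * N 0 1 + b * N 1 1 = 0 := by
    have h10 := congrFun (congrFun hNsym 0) 1
    simp only [Matrix.transpose_apply, Matrix.mul_apply, Fin.sum_univ_two,
      Matrix.of_apply, Matrix.cons_val', Matrix.cons_val_zero, Matrix.cons_val_one,
      Matrix.head_cons, Matrix.head_fin_const, Matrix.empty_val',
      Matrix.cons_val_fin_one] at h10
    linear_combination - h10
  set Dv : R := N 0 0 * N 1 1 - N 0 1 * N 1 0 with hDv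
  have hDvU : IsUnit Dv := by rw [hDv, ← Matrix.det_fin_two]; exact hNdet
  obtain ⟨Di, hDi⟩ := isUnit_iff_exists_inv.mp hDvU
  refine ⟨a * N 0 0 + b * N 1 0, Di * N 1 1, -(Di * N 0 1), ?_, ?_, N 0 0, N 1 0, ?_⟩
  · linear_combination (-(Di * N 1 0)) * hK + (a * Di) * hDv + (-a) * hDi
  · linear_combination (Di * N 0 0) * hK + (b * Di) * hDv + (-b) * hDi
  · linear_combination (-Di) * hDv + hDi

private theorem part_one {R : Type*} [CommRing R] (hsq : ∀ t : R, ∃ s : R, s * s = t)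
    (hW : ∀ A : Matrix (Fin 2) (Fin 2) R, MatUnimodular A →
        ∃ N : Matrix (Fin 2) (Fin 2) R, IsUnit N.det ∧ (A * N).transpose = A * N) :
    IsU2Ring R := by
  intro a b c hab w hw
  obtain ⟨x, y, hxy⟩ := hab
  obtain ⟨z, hz⟩ := isUnit_iff_exists_inv.mp hw
  obtain ⟨w₁, rfl⟩ := Ideal.Quotient.mk_surjective z
  rw [← map_mul, ← map_one (Ideal.Quotient.mk (Ideal.span {c})), Ideal.Quotient.eq] at hz
  obtain ⟨lam, hlam0⟩ := Ideal.mem_span_singleton'.mp hz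
  have hlam : w * w₁ - 1 = c * lam := by linear_combination - hlam0
  have hAuni : MatUnimodular (Matrix.of ![![w, a*c], ![b*c, (0:R)]]) := by
    refine ⟨w₁, -(lam*x), -(lam*y), 0, ?_⟩
    simp only [Matrix.of_apply, Matrix.cons_val', Matrix.cons_val_zero,
      Matrix.cons_val_one, Matrix.head_cons, Matrix.head_fin_const,
      Matrix.empty_val', Matrix.cons_val_fin_one]
    linear_combination hlam + (-(c*lam)) * hxy
  obtain ⟨N, hNdet, hNsym⟩ := hW _ hAuni
  set S : Matrix (Fin 2) (Fin 2) R := Matrix.of ![![w, a*c], ![b*c, (0:R)]] * N with hSdef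
  set α : R := S 0 0 with hα0
  set β : R := S 0 1 with hβ0
  set δ : R := S 1 1 with hδ0
  have hsym10 : S 1 0 = β := by
    have h10 := congrFun (congrFun hNsym 0) 1
    simpa only [Matrix.transpose_apply] using h10
  have hα : α = w * N 0 0 + a*c * N 1 0 := by
    rw [hα0, hSdef]
    simp [Matrix.mul_apply, Fin.sum_univ_two]
  have hβ : β = w * N 0 1 + a*c * N 1 1 := by
    rw [hβ0, hSdef]
    simp [Matrix.mul_apply, Fin.sum_univ_two]
  have hβ₂ : β = b*c * N 0 0 := by
    rw [← hsym10, hSdef]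
    simp [Matrix.mul_apply, Fin.sum_univ_two]
  have hδ : δ = b*c * N 0 1 := by
    rw [hδ0, hSdef]
    simp [Matrix.mul_apply, Fin.sum_univ_two]
  have hββ : β * β = (w * N 0 1 + a*c * N 1 1) * (b*c * N 0 0) := by
    nth_rewrite 1 [hβ]; rw [hβ₂]
  set Dv : R := N 0 0 * N 1 1 - N 0 1 * N 1 0 with hDet
  have hDvU : IsUnit Dv := by rw [hDet, ← Matrix.det_fin_two]; exact hNdet
  obtain ⟨Di, hDi⟩ := isUnit_iff_exists_inv.mp hDvU
  -- S * Madj = Dv • A identities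
  have hNM : N * Matrix.of ![![N 1 1, -(N 0 1)], ![-(N 1 0), N 0 0]] = Dv • 1 := by
    ext i j
    fin_cases i <;> fin_cases j <;>
      simp [Matrix.mul_apply, Fin.sum_univ_two, Matrix.one_apply] <;> ring
  have hadj : S * Matrix.of ![![N 1 1, -(N 0 1)], ![-(N 1 0), N 0 0]]
      = Dv • Matrix.of ![![w, a*c], ![b*c, (0:R)]] := by
    rw [hSdef, Matrix.mul_assoc, hNM, Matrix.mul_smul, Matrix.mul_one]
  have hE1 : α * N 1 1 - β * N 1 0 = Dv * w := by
    have h0 := congrFun (congrFun hadj 0) 0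
    simp only [Matrix.mul_apply, Fin.sum_univ_two, Matrix.smul_apply, smul_eq_mul,
      Matrix.of_apply, Matrix.cons_val', Matrix.cons_val_zero, Matrix.cons_val_one,
      Matrix.head_cons, Matrix.head_fin_const, Matrix.empty_val',
      Matrix.cons_val_fin_one] at h0
    linear_combination h0
  have hE2 : -(α * N 0 1) + β * N 0 0 = Dv * (a*c) := by
    have h0 := congrFun (congrFun hadj 0) 1
    simp only [Matrix.mul_apply, Fin.sum_univ_two, Matrix.smul_apply, smul_eq_mul,
      Matrix.of_apply, Matrix.cons_val', Matrix.cons_val_zero, Matrix.cons_val_one,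
      Matrix.head_cons, Matrix.head_fin_const, Matrix.empty_val',
      Matrix.cons_val_fin_one] at h0
    linear_combination h0
  have hE3 : β * N 1 1 - δ * N 1 0 = Dv * (b*c) := by
    have h0 := congrFun (congrFun hadj 1) 0
    rw [show (S * Matrix.of ![![N 1 1, -(N 0 1)], ![-(N 1 0), N 0 0]]) 1 0
        = S 1 0 * N 1 1 + S 1 1 * (-(N 1 0)) by
      simp [Matrix.mul_apply, Fin.sum_univ_two], hsym10] at h0
    simp only [Matrix.smul_apply, smul_eq_mul, Matrix.of_apply, Matrix.cons_val',
      Matrix.cons_val_zero, Matrix.cons_val_one, Matrix.head_cons,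
      Matrix.head_fin_const, Matrix.empty_val', Matrix.cons_val_fin_one] at h0
    linear_combination h0
  have hS : (Di*(w₁*N 1 1 + lam*x*N 0 1)) * α + (Di*(-(w₁*N 1 0) - lam*x*N 0 0 - lam*y*N 1 1)) * β
      + (Di*(lam*y*N 1 0)) * δ = 1 := by
    linear_combination (Di*w₁) * hE1 + ((-1 : R)*Di*lam*x) * hE2 + ((-1 : R)*Di*lam*y) * hE3 + (Di*Dv) * hlam + ((-1 : R)*Di*Dv*c*lam) * hxy + ((1 : R)) * hDi
  obtain ⟨u₁, u₂, v₁, v₂, Ψ, hval⟩ := value_lemma hsq α β δ _ _ _ hS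
  set g₁ : R := N 0 0 * v₁ + N 0 1 * v₂ with hg₁
  set g₂ : R := N 1 0 * v₁ + N 1 1 * v₂ with hg₂
  have hgoal1 : (u₁*w + u₂*(b*c)) * g₁ + (a*c) * (u₁*g₂ + b*c*Dv*Ψ) = 1 := by
    rw [hg₁, hg₂]
    linear_combination ((1 : R)) * hval + ((-1 : R)*u₁*v₂) * hβ + ((-1 : R)*u₂*v₁) * hβ₂ + (Ψ*a*b*c*c) * hDet + (Ψ*δ + (-1 : R)*u₁*v₁) * hα + (N 0 0*Ψ*w + N 1 0*Ψ*a*c + (-1 : R)*u₂*v₂) * hδ + ((-1 : R)*Ψ) * hββ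
  have hgoal2 : u₁ * (w*g₁ + a*c*g₂) + (b*c) * (u₂*g₁ + a*c*Dv*Ψ) = 1 := by
    rw [hg₁, hg₂]
    linear_combination ((1 : R)) * hval + ((-1 : R)*u₁*v₂) * hβ + ((-1 : R)*u₂*v₁) * hβ₂ + (Ψ*a*b*c*c) * hDet + (Ψ*δ + (-1 : R)*u₁*v₁) * hα + (N 0 0*Ψ*w + N 1 0*Ψ*a*c + (-1 : R)*u₂*v₂) * hδ + ((-1 : R)*Ψ) * hββ
  have hgoal3 : (u₁*w + u₂*(b*c)) * (w*g₁ + a*c*g₂) - w = c*(a*b*c*(u₂*g₂ - w*Dv*Ψ)) := by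
    rw [hg₁, hg₂]
    linear_combination (w) * hval + ((-1 : R)*u₁*v₂*w) * hβ + ((-1 : R)*u₂*v₁*w) * hβ₂ + (Ψ*a*b*c*c*w) * hDet + (Ψ*δ*w + (-1 : R)*u₁*v₁*w) * hα + (N 0 0*Ψ*w*w + N 1 0*Ψ*a*c*w + (-1 : R)*u₂*v₂*w) * hδ + ((-1 : R)*Ψ*w) * hββ
  refine ⟨u₁*w + u₂*(b*c), w*g₁ + a*c*g₂, ?_, ?_, ?_⟩
  · apply IsUnit.of_mul_eq_one (Ideal.Quotient.mk _ g₁)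
    rw [← map_mul, ← map_one (Ideal.Quotient.mk (Ideal.span {a*c})), Ideal.Quotient.eq]
    exact Ideal.mem_span_singleton'.mpr ⟨-(u₁*g₂ + b*c*Dv*Ψ), by linear_combination - hgoal1⟩
  · apply IsUnit.of_mul_eq_one (Ideal.Quotient.mk _ u₁)
    rw [← map_mul, ← map_one (Ideal.Quotient.mk (Ideal.span {b*c})), Ideal.Quotient.eq]
    exact Ideal.mem_span_singleton'.mpr ⟨-(u₂*g₁ + a*c*Dv*Ψ), by linear_combination - hgoal2⟩
  · rw [Ideal.Quotient.eq]
    exact Ideal.mem_span_singleton'.mpr ⟨a*b*c*(u₂*g₂ - w*Dv*Ψ), by linear_combination - hgoal3⟩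

private theorem part_two {R : Type*} [CommRing R] (hsq : ∀ t : R, ∃ s : R, s * s = t)
    (hSU : ∀ A : Matrix (Fin 2) (Fin 2) R,
      ∃ N : Matrix (Fin 2) (Fin 2) R, IsUnit N.det ∧ (A * N).transpose = A * N) :
    IsEDR R := by
  have hherm : IsHermiteRing R := hermite_of_su2 hSU
  intro A
  -- Step 1: triangularize
  obtain ⟨r₁, s, t, ha, hb, x, y, hst⟩ := hherm (A 0 0) (A 0 1)
  set N₁ : Matrix (Fin 2) (Fin 2) R := Matrix.of ![![x, -t], ![y, s]] with hN₁def
  have hN₁det : N₁.det = 1 := by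
    rw [hN₁def, Matrix.det_fin_two_of]; linear_combination hst
  set T : Matrix (Fin 2) (Fin 2) R := A * N₁ with hTdef
  have hT00 : T 0 0 = r₁ := by
    rw [hTdef, hN₁def]
    simp only [Matrix.mul_apply, Fin.sum_univ_two, Matrix.of_apply, Matrix.cons_val',
      Matrix.cons_val_zero, Matrix.cons_val_one, Matrix.head_cons, Matrix.head_fin_const,
      Matrix.empty_val', Matrix.cons_val_fin_one]
    linear_combination x * ha + y * hb + r₁ * hst
  have hT01 : T 0 1 = 0 := by
    rw [hTdef, hN₁def]
    simp only [Matrix.mul_apply, Fin.sum_univ_two, Matrix.of_apply, Matrix.cons_val',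
      Matrix.cons_val_zero, Matrix.cons_val_one, Matrix.head_cons, Matrix.head_fin_const,
      Matrix.empty_val', Matrix.cons_val_fin_one]
    linear_combination (-t) * ha + s * hb
  -- Step 2: factor out the content
  obtain ⟨r₂, s₂, t₂, h2a, h2b, x₂, y₂, h2st⟩ := hherm r₁ (T 1 0)
  obtain ⟨d, s₃, t₃, h3a, h3b, x₃, y₃, h3st⟩ := hherm r₂ (T 1 1)
  set a' : R := s₃*s₂ with ha'
  set b' : R := s₃*t₂ with hb'
  set c' : R := t₃ with hc'
  have hcont : (x₃*x₂)*a' + (x₃*y₂)*b' + y₃*c' = 1 := by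
    rw [ha', hb', hc']
    linear_combination (x₃*s₃) * h2st + h3st
  set T' : Matrix (Fin 2) (Fin 2) R := Matrix.of ![![a', 0], ![b', c']] with hT'def
  have hdT : T = d • T' := by
    have e00 : T 0 0 = d * a' := by rw [hT00, h2a, h3a, ha']; ring
    have e10 : T 1 0 = d * b' := by rw [h2b, h3a, hb']; ring
    have e11 : T 1 1 = d * c' := h3b
    rw [Matrix.eta_fin_two T, e00, hT01, e10, e11, hT'def]
    ext i j
    fin_cases i <;> fin_cases j <;> simp <;> ring
  -- Step 3: symmetrize T'
  obtain ⟨N', hN'det, hN'sym⟩ := hSU T'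
  set S : Matrix (Fin 2) (Fin 2) R := T' * N' with hSdef
  set α : R := S 0 0 with hα0
  set β : R := S 0 1 with hβ0
  set δ : R := S 1 1 with hδ0
  have hsym10 : S 1 0 = β := by
    have h10 := congrFun (congrFun hN'sym 0) 1
    simpa only [Matrix.transpose_apply] using h10
  have hT1 : α = a' * N' 0 0 := by
    rw [hα0, hSdef, hT'def]
    simp [Matrix.mul_apply, Fin.sum_univ_two]
  have hT2 : β = a' * N' 0 1 := by
    rw [hβ0, hSdef, hT'def]
    simp [Matrix.mul_apply, Fin.sum_univ_two]
  have hT3 : β = b' * N' 0 0 + c' * N' 1 0 := by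
    rw [← hsym10, hSdef, hT'def]
    simp [Matrix.mul_apply, Fin.sum_univ_two]
  have hT4 : δ = b' * N' 0 1 + c' * N' 1 1 := by
    rw [hδ0, hSdef, hT'def]
    simp [Matrix.mul_apply, Fin.sum_univ_two]
  set Dv : R := N' 0 0 * N' 1 1 - N' 0 1 * N' 1 0 with hDet
  have hDvU : IsUnit Dv := by rw [hDet, ← Matrix.det_fin_two]; exact hN'det
  obtain ⟨Di, hDi⟩ := isUnit_iff_exists_inv.mp hDvU
  have hNM : N' * Matrix.of ![![N' 1 1, -(N' 0 1)], ![-(N' 1 0), N' 0 0]] = Dv • 1 := by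
    ext i j
    fin_cases i <;> fin_cases j <;>
      simp [Matrix.mul_apply, Fin.sum_univ_two, Matrix.one_apply] <;> ring
  have hadj : S * Matrix.of ![![N' 1 1, -(N' 0 1)], ![-(N' 1 0), N' 0 0]] = Dv • T' := by
    rw [hSdef, Matrix.mul_assoc, hNM, Matrix.mul_smul, Matrix.mul_one]
  have hE1 : α * N' 1 1 - β * N' 1 0 = Dv * a' := by
    have h0 := congrFun (congrFun hadj 0) 0
    rw [hT'def] at h0
    simp only [Matrix.mul_apply, Fin.sum_univ_two, Matrix.smul_apply, smul_eq_mul,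
      Matrix.of_apply, Matrix.cons_val', Matrix.cons_val_zero, Matrix.cons_val_one,
      Matrix.head_cons, Matrix.head_fin_const, Matrix.empty_val',
      Matrix.cons_val_fin_one] at h0
    linear_combination h0
  have hE3 : β * N' 1 1 - δ * N' 1 0 = Dv * b' := by
    have h0 := congrFun (congrFun hadj 1) 0
    rw [show (S * Matrix.of ![![N' 1 1, -(N' 0 1)], ![-(N' 1 0), N' 0 0]]) 1 0
        = S 1 0 * N' 1 1 + S 1 1 * (-(N' 1 0)) by
      simp [Matrix.mul_apply, Fin.sum_univ_two], hsym10] at h0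
    rw [hT'def] at h0
    simp only [Matrix.smul_apply, smul_eq_mul, Matrix.of_apply, Matrix.cons_val',
      Matrix.cons_val_zero, Matrix.cons_val_one, Matrix.head_cons,
      Matrix.head_fin_const, Matrix.empty_val', Matrix.cons_val_fin_one] at h0
    linear_combination h0
  have hE4 : -(β * N' 0 1) + δ * N' 0 0 = Dv * c' := by
    have h0 := congrFun (congrFun hadj 1) 1
    rw [show (S * Matrix.of ![![N' 1 1, -(N' 0 1)], ![-(N' 1 0), N' 0 0]]) 1 1
        = S 1 0 * (-(N' 0 1)) + S 1 1 * N' 0 0 by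
      simp [Matrix.mul_apply, Fin.sum_univ_two], hsym10] at h0
    rw [hT'def] at h0
    simp only [Matrix.smul_apply, smul_eq_mul, Matrix.of_apply, Matrix.cons_val',
      Matrix.cons_val_zero, Matrix.cons_val_one, Matrix.head_cons,
      Matrix.head_fin_const, Matrix.empty_val', Matrix.cons_val_fin_one] at h0
    linear_combination h0
  have hSuni : (Di*((x₃*x₂)*N' 1 1)) * α
      + (Di*(-((x₃*x₂)*N' 1 0) + (x₃*y₂)*N' 1 1 - y₃*N' 0 1)) * β
      + (Di*(-((x₃*y₂)*N' 1 0) + y₃*N' 0 0)) * δ = 1 := by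
    linear_combination (Di*(x₃*x₂)) * hE1 + (Di*(x₃*y₂)) * hE3 + (Di*y₃) * hE4 + (Di*Dv) * hcont + ((1 : R)) * hDi
  obtain ⟨u₁, u₂, v₁, v₂, Ψ, hval⟩ := value_lemma hsq α β δ _ _ _ hSuni
  -- Step 6: Hermite factorization of the column, and the lifting trick
  obtain ⟨e, k₁, k₂, hge1, hge2, m₁, m₂, hkm⟩ := hherm (α*v₁ + β*v₂) (β*v₁ + δ*v₂)
  have hA0e : (u₁*k₁ + u₂*k₂) * e = 1 + (α*δ - β*β)*Ψ := by
    linear_combination hval + (-u₁) * hge1 + (-u₂) * hge2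
  set φ₁ : R := (u₁*k₁ + u₂*k₂)*m₁ - Ψ*k₂ with hφ₁
  set φ₂ : R := (u₁*k₁ + u₂*k₂)*m₂ + Ψ*k₁ with hφ₂
  have hXφ : φ₁*((α*v₁ + β*v₂) + (α*δ - β*β)*m₂) + φ₂*((β*v₁ + δ*v₂) - (α*δ - β*β)*m₁) = 1 := by
    rw [hφ₁, hφ₂]
    linear_combination ((1 : R)) * hA0e + ((-1 : R)*Ψ*k₂ + k₁*m₁*u₁ + k₂*m₁*u₂) * hge1 + (Ψ*k₁ + k₁*m₂*u₁ + k₂*m₂*u₂) * hge2 + ((-1 : R)*Ψ*α*δ + Ψ*β*β + e*k₁*u₁ + e*k₂*u₂) * hkm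
  set z₁ : R := v₁ + δ*m₂ + β*m₁ with hz₁
  set z₂ : R := v₂ - β*m₂ - α*m₁ with hz₂
  set zz₁ : R := N' 0 0 * z₁ + N' 0 1 * z₂ with hzz₁
  set zz₂ : R := N' 1 0 * z₁ + N' 1 1 * z₂ with hzz₂
  set ρ₁ : R := φ₁*a' + φ₂*b' with hρ₁
  set ρ₂ : R := φ₂*c' with hρ₂
  have hrow : ρ₁*zz₁ + ρ₂*zz₂ = 1 := by
    rw [hρ₁, hρ₂, hzz₁, hzz₂, hz₁, hz₂]
    linear_combination hXφ + (-(φ₁*(v₁ + δ*m₂ + β*m₁))) * hT1 + (-(φ₁*(v₂ - β*m₂ - α*m₁))) * hT2 + (-(φ₂*(v₁ + δ*m₂ + β*m₁))) * hT3 + (-(φ₂*(v₂ - β*m₂ - α*m₁))) * hT4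
  -- Step 8: assembly
  set κ₁ : R := a'*zz₁ with hκ₁
  set κ₂ : R := b'*zz₁ + c'*zz₂ with hκ₂
  have hφκ : φ₁*κ₁ + φ₂*κ₂ = 1 := by
    rw [hκ₁, hκ₂]; linear_combination hrow
  set M₂ : Matrix (Fin 2) (Fin 2) R := Matrix.of ![![φ₁, φ₂], ![-κ₂, κ₁]] with hM₂def
  set N₂ : Matrix (Fin 2) (Fin 2) R := Matrix.of ![![zz₁, -ρ₂], ![zz₂, ρ₁]] with hN₂def
  set Gs : R := (-κ₂*a' + κ₁*b')*zz₁ + (κ₁*c')*zz₂ with hGs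
  set Hs : R := (-κ₂*a' + κ₁*b')*(-ρ₂) + (κ₁*c')*ρ₁ with hHs
  have hP : M₂ * T' * N₂ = Matrix.of ![![1, 0], ![Gs, Hs]] := by
    ext i j
    fin_cases i <;> fin_cases j <;>
      simp only [Fin.zero_eta, Fin.mk_one, Fin.isValue, hM₂def, hT'def, hN₂def,
        Matrix.mul_apply, Fin.sum_univ_two, Matrix.of_apply, Matrix.cons_val',
        Matrix.cons_val_zero, Matrix.cons_val_one, Matrix.head_cons, Matrix.head_fin_const,
        Matrix.empty_val', Matrix.cons_val_fin_one]
    · linear_combination hrow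
    · ring
    · rw [hGs]; ring
    · rw [hHs]; ring
  set M₃ : Matrix (Fin 2) (Fin 2) R := Matrix.of ![![1, 0], ![-Gs, 1]] with hM₃def
  have hM₃P : M₃ * Matrix.of ![![(1:R), 0], ![Gs, Hs]] = Matrix.of ![![1, 0], ![0, Hs]] := by
    ext i j
    fin_cases i <;> fin_cases j <;>
      simp only [Fin.zero_eta, Fin.mk_one, Fin.isValue, hM₃def,
        Matrix.mul_apply, Fin.sum_univ_two, Matrix.of_apply, Matrix.cons_val',
        Matrix.cons_val_zero, Matrix.cons_val_one, Matrix.head_cons, Matrix.head_fin_const,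
        Matrix.empty_val', Matrix.cons_val_fin_one]
    all_goals ring
  have hM₂det : M₂.det = 1 := by
    rw [hM₂def, Matrix.det_fin_two_of]; linear_combination hφκ
  have hM₃det : M₃.det = 1 := by
    rw [hM₃def, Matrix.det_fin_two_of]; ring
  have hN₂det : N₂.det = 1 := by
    rw [hN₂def, Matrix.det_fin_two_of]; linear_combination hrow
  refine ⟨M₃ * M₂, N₁ * N₂, ?_, ?_, d, d * Hs, ⟨Hs, rfl⟩, ?_⟩
  · rw [Matrix.det_mul, hM₃det, hM₂det, one_mul]; exact isUnit_one
  · rw [Matrix.det_mul, hN₁det, hN₂det, one_mul]; exact isUnit_one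
  · calc M₃ * M₂ * A * (N₁ * N₂)
        = M₃ * (M₂ * (T * N₂)) := by
          rw [hTdef]; simp only [Matrix.mul_assoc]
      _ = M₃ * (M₂ * ((d • T') * N₂)) := by rw [← hdT]
      _ = d • (M₃ * (M₂ * T' * N₂)) := by
          rw [Matrix.smul_mul, Matrix.mul_smul, Matrix.mul_smul, Matrix.mul_assoc]
      _ = d • (M₃ * Matrix.of ![![1, 0], ![Gs, Hs]]) := by rw [hP]
      _ = d • Matrix.of ![![(1:R), 0], ![0, Hs]] := by rw [hM₃P]
      _ = Matrix.of ![![d, 0], ![0, d * Hs]] := by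
          ext i j
          fin_cases i <;> fin_cases j <;>
            simp only [Fin.zero_eta, Fin.mk_one, Fin.isValue, Matrix.smul_apply,
              smul_eq_mul, Matrix.of_apply, Matrix.cons_val', Matrix.cons_val_zero,
              Matrix.cons_val_one, Matrix.head_cons, Matrix.head_fin_const,
              Matrix.empty_val', Matrix.cons_val_fin_one]
          all_goals ring

theorem wsu2_squares_u2_and_su2_edr (R : Type*) [CommRing R]
    (hsq : ∀ x : R, ∃ y : R, y * y = x) :
    ((∀ A : Matrix (Fin 2) (Fin 2) R, MatUnimodular A →
        ∃ N : Matrix (Fin 2) (Fin 2) R, IsUnit N.det ∧ (A * N).transpose = A * N) →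
      IsU2Ring R) ∧
    ((∀ A : Matrix (Fin 2) (Fin 2) R,
        ∃ N : Matrix (Fin 2) (Fin 2) R, IsUnit N.det ∧ (A * N).transpose = A * N) →
      IsEDR R) := by
  constructor
  · exact fun hW => part_one hsq hW
  · exact fun hSU => part_two hsq hSU
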